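/- Let n be a positive natural number. Let Kp and Kv be symmetric positive definite real n×n matrices and set Δ = Kv⁻¹ Kp. Let M : ℝ → Matrix n n ℝ be differentiable with M(t) symmetric for every t, and suppose there exist constants 0 < m ≤ m̄ such that m‖v‖² ≤ vᵀ M(t) v ≤ m̄‖v‖² for all t ∈ ℝ and v ∈ ℝⁿ. Let C : ℝ → Matrix n n ℝ satisfy M′(t) = C(t) + C(t)ᵀ for all t. Let e : ℝ → ℝⁿ be twice differentiable and satisfy the closed-loop equation M(t)(e″(t) + Δ e′(t)) + C(t)(e′(t) + Δ e(t)) + Kv e′(t) + Kp e(t) = 0 for all t. Then e(t) → 0 and e′(t) → 0 as t → ∞; in particular the origin (e, e′) = (0, 0) is globally asymptotically stable. -/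

import Mathlib

open Matrix Filter

section helpers

lemma dot_self_nonneg' {n : ℕ} (v : Fin n → ℝ) : 0 ≤ v ⬝ᵥ v :=
  Finset.sum_nonneg fun i _ => mul_self_nonneg _

lemma quad_extrema {n : ℕ} (A : Matrix (Fin n) (Fin n) ℝ) (hn : 0 < n) :
    ∃ v0 v1 : Fin n → ℝ, v0 ⬝ᵥ v0 = 1 ∧ v1 ⬝ᵥ v1 = 1 ∧
      (∀ u : Fin n → ℝ, u ⬝ᵥ u = 1 → v0 ⬝ᵥ (A *ᵥ v0) ≤ u ⬝ᵥ (A *ᵥ u)) ∧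
      (∀ u : Fin n → ℝ, u ⬝ᵥ u = 1 → u ⬝ᵥ (A *ᵥ u) ≤ v1 ⬝ᵥ (A *ᵥ v1)) := by
  set q : (Fin n → ℝ) → ℝ := fun v => v ⬝ᵥ (A *ᵥ v) with hq
  have hqc : Continuous q := by
    unfold q
    simp only [dotProduct, Matrix.mulVec]
    exact continuous_finset_sum _ fun i _ =>
      ((continuous_apply i).mul (continuous_finset_sum _ fun j _ =>
        continuous_const.mul (continuous_apply j)))
  set S : Set (Fin n → ℝ) := {v | v ⬝ᵥ v = 1} with hS
  have hSc : IsClosed S := by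
    have : Continuous fun v : Fin n → ℝ => v ⬝ᵥ v := by
      simp only [dotProduct]
      exact continuous_finset_sum _ fun i _ => (continuous_apply i).mul (continuous_apply i)
    exact isClosed_eq this continuous_const
  have hsub : S ⊆ Metric.closedBall 0 1 := by
    intro v hv
    rw [Metric.mem_closedBall, dist_zero_right]
    rw [pi_norm_le_iff_of_nonneg zero_le_one]
    intro i
    have h1 : (v i) * (v i) ≤ v ⬝ᵥ v := by
      rw [dotProduct]
      exact Finset.single_le_sum (f := fun j => v j * v j)
        (fun j _ => mul_self_nonneg _) (Finset.mem_univ i)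
    rw [hv] at h1
    rw [Real.norm_eq_abs]
    exact abs_le_one_iff_mul_self_le_one.mpr h1
  have hcomp : IsCompact S := (isCompact_closedBall (0 : Fin n → ℝ) 1).of_isClosed_subset hSc hsub
  have hne : S.Nonempty := by
    refine ⟨Pi.single ⟨0, hn⟩ 1, ?_⟩
    simp [hS, dotProduct, Pi.single_apply]
  obtain ⟨v0, hv0S, hmin⟩ := hcomp.exists_isMinOn hne hqc.continuousOn
  obtain ⟨v1, hv1S, hmax⟩ := hcomp.exists_isMaxOn hne hqc.continuousOn
  exact ⟨v0, v1, hv0S, hv1S, fun u hu => hmin hu, fun u hu => hmax hu⟩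

lemma quad_scale {n : ℕ} (A : Matrix (Fin n) (Fin n) ℝ) (v : Fin n → ℝ) (hv : v ≠ 0) :
    ∃ u : Fin n → ℝ, u ⬝ᵥ u = 1 ∧
      v ⬝ᵥ (A *ᵥ v) = (v ⬝ᵥ v) * (u ⬝ᵥ (A *ᵥ u)) := by
  have hvv : 0 < v ⬝ᵥ v := by
    have h0 : v ⬝ᵥ v ≠ 0 := fun h => hv (dotProduct_self_eq_zero.mp h)
    exact lt_of_le_of_ne (dot_self_nonneg' v) (Ne.symm h0)
  set r := Real.sqrt (v ⬝ᵥ v) with hr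
  have hrpos : 0 < r := Real.sqrt_pos.mpr hvv
  have hr2 : r * r = v ⬝ᵥ v := Real.mul_self_sqrt hvv.le
  refine ⟨r⁻¹ • v, ?_, ?_⟩
  · rw [smul_dotProduct, dotProduct_smul, smul_eq_mul, smul_eq_mul]
    field_simp
    linarith [hr2]
  · rw [smul_dotProduct, Matrix.mulVec_smul, dotProduct_smul,
      smul_eq_mul, smul_eq_mul, ← hr2]
    field_simp

lemma quad_lower {n : ℕ} (A : Matrix (Fin n) (Fin n) ℝ) (hn : 0 < n) (hA : A.PosDef) :
    ∃ c > 0, ∀ v : Fin n → ℝ, c * (v ⬝ᵥ v) ≤ v ⬝ᵥ (A *ᵥ v) := by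
  obtain ⟨v0, v1, hv0, hv1, hmin, hmax⟩ := quad_extrema A hn
  have hv0ne : v0 ≠ 0 := by
    intro h; rw [h] at hv0; simp [dotProduct] at hv0
  have hcpos : 0 < v0 ⬝ᵥ (A *ᵥ v0) := by
    have := hA.dotProduct_mulVec_pos hv0ne
    simpa using this
  refine ⟨v0 ⬝ᵥ (A *ᵥ v0), hcpos, fun v => ?_⟩
  by_cases hv : v = 0
  · simp [hv]
  · obtain ⟨u, hu, heq⟩ := quad_scale A v hv
    rw [heq]
    have := hmin u hu
    nlinarith [dot_self_nonneg' v]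

lemma quad_upper {n : ℕ} (A : Matrix (Fin n) (Fin n) ℝ) (hn : 0 < n) :
    ∃ c > 0, ∀ v : Fin n → ℝ, v ⬝ᵥ (A *ᵥ v) ≤ c * (v ⬝ᵥ v) := by
  obtain ⟨v0, v1, hv0, hv1, hmin, hmax⟩ := quad_extrema A hn
  refine ⟨max (v1 ⬝ᵥ (A *ᵥ v1)) 1, lt_of_lt_of_le one_pos (le_max_right _ _), fun v => ?_⟩
  by_cases hv : v = 0
  · simp [hv]
  · obtain ⟨u, hu, heq⟩ := quad_scale A v hv
    rw [heq]
    have h1 := hmax u hu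
    have h2 : u ⬝ᵥ (A *ᵥ u) ≤ max (v1 ⬝ᵥ (A *ᵥ v1)) 1 := le_trans h1 (le_max_left _ _)
    nlinarith [dot_self_nonneg' v]

lemma dot_mulVec_symm {n : ℕ} {A : Matrix (Fin n) (Fin n) ℝ} (hA : A.IsSymm)
    (v w : Fin n → ℝ) : v ⬝ᵥ (A *ᵥ w) = w ⬝ᵥ (A *ᵥ v) := by
  rw [Matrix.dotProduct_mulVec, ← Matrix.mulVec_transpose, hA.eq, dotProduct_comm]

lemma posdef_isSymm {n : ℕ} {A : Matrix (Fin n) (Fin n) ℝ} (hA : A.PosDef) : A.IsSymm := by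
  have h := hA.isHermitian
  rw [Matrix.IsHermitian] at h
  rw [Matrix.IsSymm]
  simpa using h

lemma quad_Q_eq {n : ℕ} (Kp Kv : Matrix (Fin n) (Fin n) ℝ) (hKp : Kp.IsSymm)
    (e : Fin n → ℝ) :
    e ⬝ᵥ ((Kp * Kv⁻¹ * Kp) *ᵥ e) = (Kp *ᵥ e) ⬝ᵥ (Kv⁻¹ *ᵥ (Kp *ᵥ e)) := by
  rw [← Matrix.mulVec_mulVec, ← Matrix.mulVec_mulVec]
  rw [Matrix.dotProduct_mulVec (v := e), ← Matrix.mulVec_transpose, hKp.eq]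

lemma Q_posdef {n : ℕ} (Kp Kv : Matrix (Fin n) (Fin n) ℝ)
    (hKp : Kp.PosDef) (hKv : Kv.PosDef) : (Kp * Kv⁻¹ * Kp).PosDef := by
  have hKpH := hKp.isHermitian
  have hKviH := hKv.inv.isHermitian
  refine Matrix.PosDef.of_dotProduct_mulVec_pos ?_ ?_
  · rw [Matrix.IsHermitian, Matrix.conjTranspose_mul, Matrix.conjTranspose_mul,
      hKpH.eq, hKviH.eq, Matrix.mul_assoc]
  · intro x hx
    have hKpx : Kp *ᵥ x ≠ 0 := by
      intro h
      apply hx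
      have := congrArg (fun y => Kp⁻¹ *ᵥ y) h
      simpa [Matrix.mulVec_mulVec,
        Matrix.nonsing_inv_mul _ (Matrix.isUnit_iff_isUnit_det _ |>.mp hKp.isUnit),
        Matrix.one_mulVec] using this
    have hpos := hKv.inv.dotProduct_mulVec_pos hKpx
    simp only [star_trivial] at hpos ⊢
    rw [quad_Q_eq Kp Kv (posdef_isSymm hKp)]
    exact hpos

lemma cross_bound {n : ℕ} (Kp Kv : Matrix (Fin n) (Fin n) ℝ)
    (hKp : Kp.PosDef) (hKv : Kv.PosDef) (s e : Fin n → ℝ) :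
    2 * (s ⬝ᵥ (Kp *ᵥ e)) ≤ s ⬝ᵥ (Kv *ᵥ s) + e ⬝ᵥ ((Kp * Kv⁻¹ * Kp) *ᵥ e) := by
  have hdet := Matrix.isUnit_iff_isUnit_det _ |>.mp hKv.isUnit
  set b := Kp *ᵥ e with hb
  set w := s - Kv⁻¹ *ᵥ b with hw
  have hKvsymm := posdef_isSymm hKv
  have h0 : 0 ≤ w ⬝ᵥ (Kv *ᵥ w) := by simpa using hKv.posSemidef.dotProduct_mulVec_nonneg w
  have h1 : Kv *ᵥ w = Kv *ᵥ s - b := by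
    rw [hw, Matrix.mulVec_sub, Matrix.mulVec_mulVec, Matrix.mul_nonsing_inv _ hdet,
      Matrix.one_mulVec]
  have h2 : (Kv⁻¹ *ᵥ b) ⬝ᵥ (Kv *ᵥ s) = s ⬝ᵥ b := by
    rw [dot_mulVec_symm hKvsymm, Matrix.mulVec_mulVec, Matrix.mul_nonsing_inv _ hdet,
      Matrix.one_mulVec]
  have h3 : (Kv⁻¹ *ᵥ b) ⬝ᵥ b = e ⬝ᵥ ((Kp * Kv⁻¹ * Kp) *ᵥ e) := by
    rw [dotProduct_comm, quad_Q_eq Kp Kv (posdef_isSymm hKp)]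
  have hexp : w ⬝ᵥ (Kv *ᵥ w)
      = s ⬝ᵥ (Kv *ᵥ s) - 2 * (s ⬝ᵥ b) + e ⬝ᵥ ((Kp * Kv⁻¹ * Kp) *ᵥ e) := by
    rw [h1, hw, sub_dotProduct, dotProduct_sub, dotProduct_sub, h2, h3]
    ring
  linarith [h0, hexp]

lemma hasDerivAt_dot {n : ℕ} {f g : ℝ → Fin n → ℝ} {f' g' : Fin n → ℝ} {t : ℝ}
    (hf : ∀ i, HasDerivAt (fun u => f u i) (f' i) t)
    (hg : ∀ i, HasDerivAt (fun u => g u i) (g' i) t) :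
    HasDerivAt (fun u => f u ⬝ᵥ g u) (f' ⬝ᵥ g t + f t ⬝ᵥ g') t := by
  have h : HasDerivAt (fun u => ∑ i, f u i * g u i)
      (∑ i, (f' i * g t i + f t i * g' i)) t :=
    HasDerivAt.fun_sum fun i _ => (hf i).mul (hg i)
  simpa [dotProduct, Finset.sum_add_distrib] using h

lemma hasDerivAt_const_mulVec {n : ℕ} {A : Matrix (Fin n) (Fin n) ℝ}
    {e : ℝ → Fin n → ℝ} {e't : Fin n → ℝ} {t : ℝ}
    (he : ∀ i, HasDerivAt (fun u => e u i) (e't i) t) (i : Fin n) :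
    HasDerivAt (fun u => (A *ᵥ e u) i) ((A *ᵥ e't) i) t := by
  simp only [Matrix.mulVec, dotProduct]
  exact HasDerivAt.fun_sum fun j _ => (he j).const_mul (A i j)

lemma hasDerivAt_mulVec {n : ℕ} {M : ℝ → Matrix (Fin n) (Fin n) ℝ}
    {M't : Matrix (Fin n) (Fin n) ℝ} {s : ℝ → Fin n → ℝ} {s't : Fin n → ℝ} {t : ℝ}
    (hM : ∀ i j, HasDerivAt (fun u => M u i j) (M't i j) t)
    (hs : ∀ i, HasDerivAt (fun u => s u i) (s't i) t) (i : Fin n) :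
    HasDerivAt (fun u => (M u *ᵥ s u) i) ((M't *ᵥ s t + M t *ᵥ s't) i) t := by
  have h : HasDerivAt (fun u => ∑ j, M u i j * s u j)
      (∑ j, (M't i j * s t j + M t i j * s't j)) t :=
    HasDerivAt.fun_sum fun j _ => (hM i j).mul (hs j)
  simpa [Matrix.mulVec, dotProduct, Finset.sum_add_distrib] using h

end helpers

set_option maxHeartbeats 1000000 in
/-- Theorem 1 of the paper: the closed-loop error equation
`M(t)(e'' + Δ e') + C(t)(e' + Δ e) + Kv e' + Kp e = 0`, with `Kp`, `Kv`
symmetric positive definite, `Δ = Kv⁻¹ Kp`, `M` symmetric, uniformly positive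
definite and bounded (`m ‖v‖² ≤ vᵀ M(t) v ≤ m̄ ‖v‖²`), and `M' = C + Cᵀ`,
has its errors converge: `e(t) → 0` and `e'(t) → 0` as `t → ∞`;
the origin is globally asymptotically stable. -/
theorem pd_tracking_global_asymptotic_stability
    (n : ℕ) (hn : 0 < n)
    (Kp Kv Δ : Matrix (Fin n) (Fin n) ℝ)
    (hKp : Kp.PosDef) (hKv : Kv.PosDef)
    (hΔ : Δ = Kv⁻¹ * Kp)
    (M M' C : ℝ → Matrix (Fin n) (Fin n) ℝ)
    (hMdiff : ∀ i j t, HasDerivAt (fun u => M u i j) (M' t i j) t)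
    (hMsymm : ∀ t, (M t).IsSymm)
    (m mbar : ℝ) (hm : 0 < m) (hmm : m ≤ mbar)
    (hMlow : ∀ (t : ℝ) (v : Fin n → ℝ), m * (v ⬝ᵥ v) ≤ v ⬝ᵥ (M t *ᵥ v))
    (hMhigh : ∀ (t : ℝ) (v : Fin n → ℝ), v ⬝ᵥ (M t *ᵥ v) ≤ mbar * (v ⬝ᵥ v))
    (hMC : ∀ t, M' t = C t + (C t)ᵀ)
    (e e' e'' : ℝ → Fin n → ℝ)
    (he : ∀ i t, HasDerivAt (fun u => e u i) (e' t i) t)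
    (he' : ∀ i t, HasDerivAt (fun u => e' u i) (e'' t i) t)
    (hloop : ∀ t, M t *ᵥ (e'' t + Δ *ᵥ e' t) + C t *ᵥ (e' t + Δ *ᵥ e t)
      + Kv *ᵥ e' t + Kp *ᵥ e t = 0) :
    Tendsto e atTop (nhds 0) ∧ Tendsto e' atTop (nhds 0) := by
  have hmbar : 0 < mbar := lt_of_lt_of_le hm hmm
  have hKvdet := Matrix.isUnit_iff_isUnit_det _ |>.mp hKv.isUnit
  have hKvΔ : Kv * Δ = Kp := by
    rw [hΔ, Matrix.mul_nonsing_inv_cancel_left _ _ hKvdet]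
  have hKpΔ : Kp * Δ = Kp * Kv⁻¹ * Kp := by rw [hΔ, Matrix.mul_assoc]
  have hQpos := Q_posdef Kp Kv hKp hKv
  have hKpsymm := posdef_isSymm hKp
  -- the sliding variable
  set s : ℝ → Fin n → ℝ := fun t => e' t + Δ *ᵥ e t with hs_def
  set s' : ℝ → Fin n → ℝ := fun t => e'' t + Δ *ᵥ e' t with hs'_def
  clear_value s s'
  have hs_eq : ∀ t, s t = e' t + Δ *ᵥ e t := fun t => by rw [hs_def]
  have hs'_eq : ∀ t, s' t = e'' t + Δ *ᵥ e' t := fun t => by rw [hs'_def]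
  have hs : ∀ i t, HasDerivAt (fun u => s u i) (s' t i) t := by
    intro i t
    have h1 : HasDerivAt (fun u => (Δ *ᵥ e u) i) ((Δ *ᵥ e' t) i) t :=
      hasDerivAt_const_mulVec (fun j => he j t) i
    have h2 := (he' i t).add h1
    simp only [hs_def, hs'_def, Pi.add_apply]
    exact h2
  -- the closed loop in terms of s
  have hMs' : ∀ t, M t *ᵥ s' t = -(C t *ᵥ s t) - Kv *ᵥ s t := by
    intro t
    have hKvs : Kv *ᵥ e' t + Kp *ᵥ e t = Kv *ᵥ (e' t + Δ *ᵥ e t) := by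
      simp only [Matrix.mulVec_add, Matrix.mulVec_mulVec, hKvΔ]
    have h : M t *ᵥ (e'' t + Δ *ᵥ e' t) + C t *ᵥ (e' t + Δ *ᵥ e t)
        + Kv *ᵥ (e' t + Δ *ᵥ e t) = 0 := by
      have h0 := hloop t
      rw [add_assoc, hKvs] at h0
      exact h0
    rw [hs'_eq t, hs_eq t]
    linear_combination h
  -- Lyapunov function and its formal derivative
  set V : ℝ → ℝ := fun t => s t ⬝ᵥ (M t *ᵥ s t) + e t ⬝ᵥ (Kp *ᵥ e t) with hV_def
  set W : ℝ → ℝ := fun t =>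
    (s' t ⬝ᵥ (M t *ᵥ s t) + s t ⬝ᵥ (M' t *ᵥ s t + M t *ᵥ s' t))
    + (e' t ⬝ᵥ (Kp *ᵥ e t) + e t ⬝ᵥ (Kp *ᵥ e' t)) with hW_def
  clear_value V W
  have hV_eq : ∀ t, V t = s t ⬝ᵥ (M t *ᵥ s t) + e t ⬝ᵥ (Kp *ᵥ e t) :=
    fun t => by rw [hV_def]
  have hW_eq : ∀ t, W t =
      (s' t ⬝ᵥ (M t *ᵥ s t) + s t ⬝ᵥ (M' t *ᵥ s t + M t *ᵥ s' t))
      + (e' t ⬝ᵥ (Kp *ᵥ e t) + e t ⬝ᵥ (Kp *ᵥ e' t)) := fun t => by rw [hW_def]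
  have hVd : ∀ t, HasDerivAt V (W t) t := by
    intro t
    rw [hV_def, hW_def]
    exact (hasDerivAt_dot (fun i => hs i t)
        (fun i => hasDerivAt_mulVec (fun i j => hMdiff i j t) (fun i => hs i t) i)).add
      (hasDerivAt_dot (fun i => he i t) (fun i => hasDerivAt_const_mulVec (fun j => he j t) i))
  -- constants
  obtain ⟨l1, hl1, hKvlow⟩ := quad_lower Kv hn hKv
  obtain ⟨l2, hl2, hQlow⟩ := quad_lower (Kp * Kv⁻¹ * Kp) hn hQpos
  obtain ⟨l3, hl3, hKphigh⟩ := quad_upper Kp hn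
  obtain ⟨l4, hl4, hKplow⟩ := quad_lower Kp hn hKp
  set c : ℝ := min (l1 / mbar) (l2 / l3) with hc_def
  have hcpos : 0 < c := lt_min (div_pos hl1 hmbar) (div_pos hl2 hl3)
  clear_value c
  -- the key differential inequality
  have hW_le : ∀ t, W t ≤ -(c * V t) := by
    intro t
    have e1 : s' t ⬝ᵥ (M t *ᵥ s t) = s t ⬝ᵥ (M t *ᵥ s' t) :=
      dot_mulVec_symm (hMsymm t) _ _
    have e2 : e' t ⬝ᵥ (Kp *ᵥ e t) = e t ⬝ᵥ (Kp *ᵥ e' t) :=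
      dot_mulVec_symm hKpsymm _ _
    have e3 : s t ⬝ᵥ (M' t *ᵥ s t) = 2 * (s t ⬝ᵥ (C t *ᵥ s t)) := by
      rw [hMC t, Matrix.add_mulVec, dotProduct_add]
      have h : s t ⬝ᵥ ((C t)ᵀ *ᵥ s t) = s t ⬝ᵥ (C t *ᵥ s t) := by
        rw [Matrix.mulVec_transpose, dotProduct_comm, ← Matrix.dotProduct_mulVec]
      rw [h]; ring
    have e4 : s t ⬝ᵥ (M t *ᵥ s' t)
        = -(s t ⬝ᵥ (C t *ᵥ s t)) - s t ⬝ᵥ (Kv *ᵥ s t) := by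
      rw [hMs' t, dotProduct_sub, dotProduct_neg]
    have he'eq : e' t = s t - Δ *ᵥ e t := by
      rw [hs_eq t]; abel
    have e5 : e t ⬝ᵥ (Kp *ᵥ e' t)
        = s t ⬝ᵥ (Kp *ᵥ e t) - e t ⬝ᵥ ((Kp * Kv⁻¹ * Kp) *ᵥ e t) := by
      rw [he'eq, Matrix.mulVec_sub, dotProduct_sub]
      congr 1
      · exact dot_mulVec_symm hKpsymm _ _
      · rw [Matrix.mulVec_mulVec, hKpΔ]
    have hident : W t = -(2 * (s t ⬝ᵥ (Kv *ᵥ s t)))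
        + 2 * (s t ⬝ᵥ (Kp *ᵥ e t)) - 2 * (e t ⬝ᵥ ((Kp * Kv⁻¹ * Kp) *ᵥ e t)) := by
      rw [hW_eq t, dotProduct_add, e1, e2, e3, e4, e5]
      ring
    have hcross := cross_bound Kp Kv hKp hKv (s t) (e t)
    have hb1 := hKvlow (s t)
    have hb2 := hQlow (e t)
    have hb3 := hKphigh (e t)
    have hb4 := hMhigh t (s t)
    have hss := dot_self_nonneg' (s t)
    have hee := dot_self_nonneg' (e t)
    have hc1 : c * mbar ≤ l1 := by
      have h := min_le_left (l1 / mbar) (l2 / l3)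
      rw [← hc_def] at h
      calc c * mbar ≤ (l1 / mbar) * mbar := by nlinarith
        _ = l1 := by field_simp
    have hc2 : c * l3 ≤ l2 := by
      have h := min_le_right (l1 / mbar) (l2 / l3)
      rw [← hc_def] at h
      calc c * l3 ≤ (l2 / l3) * l3 := by nlinarith
        _ = l2 := by field_simp
    rw [hident, hV_eq t]
    nlinarith [hcpos.le, mul_nonneg hcpos.le hss, mul_nonneg hcpos.le hee]
  -- nonnegativity of V
  have hVnonneg : ∀ t, 0 ≤ V t := by
    intro t
    have h1 := hMlow t (s t)
    have h2 := hKplow (e t)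
    have hss := dot_self_nonneg' (s t)
    have hee := dot_self_nonneg' (e t)
    rw [hV_eq t]
    nlinarith
  -- Gronwall: V t ≤ V 0 * exp (-(c*t)) for t ≥ 0
  set g : ℝ → ℝ := fun t => V t * Real.exp (c * t) with hg_def
  clear_value g
  have hgd : ∀ t, HasDerivAt g ((W t + c * V t) * Real.exp (c * t)) t := by
    intro t
    rw [hg_def]
    have hexp : HasDerivAt (fun u => Real.exp (c * u)) (Real.exp (c * t) * c) t := by
      have h := (Real.hasDerivAt_exp (c * t)).comp t ((hasDerivAt_id t).const_mul c)
      simpa [mul_comm, Function.comp_def] using h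
    have h := (hVd t).mul hexp
    convert h using 1
    exacts [rfl, rfl, rfl, by ring]
  have hganti : Antitone g := by
    apply antitone_of_deriv_nonpos
    · exact fun t => (hgd t).differentiableAt
    · intro t
      rw [(hgd t).deriv]
      have h := hW_le t
      have hexp := Real.exp_pos (c * t)
      nlinarith
  have hVle : ∀ t : ℝ, 0 ≤ t → V t ≤ V 0 * Real.exp (-(c * t)) := by
    intro t ht
    have h1 : g t ≤ g 0 := hganti ht
    rw [hg_def] at h1
    simp only [mul_zero, Real.exp_zero, mul_one] at h1
    rw [Real.exp_neg, ← div_eq_mul_inv, le_div_iff₀ (Real.exp_pos _)]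
    exact h1
  -- V tends to zero
  have hexp_tend : Tendsto (fun t : ℝ => V 0 * Real.exp (-(c * t))) atTop (nhds 0) := by
    have h1 : Tendsto (fun t : ℝ => c * t) atTop atTop :=
      Tendsto.const_mul_atTop hcpos tendsto_id
    have h2 := Real.tendsto_exp_neg_atTop_nhds_zero.comp h1
    have h3 := h2.const_mul (V 0)
    simpa [Function.comp] using h3
  have hVtend : Tendsto V atTop (nhds 0) := by
    apply squeeze_zero' (Eventually.of_forall hVnonneg) ?_ hexp_tend
    filter_upwards [eventually_ge_atTop (0 : ℝ)] with t ht using hVle t ht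
  -- the quadratic norms tend to zero
  have hee_tend : Tendsto (fun t => e t ⬝ᵥ e t) atTop (nhds 0) := by
    have hdiv : Tendsto (fun t => V t / l4) atTop (nhds 0) := by
      simpa using hVtend.div_const l4
    apply squeeze_zero' (Eventually.of_forall fun t => dot_self_nonneg' (e t))
      (Eventually.of_forall fun t => ?_) hdiv
    rw [le_div_iff₀ hl4]
    have h1 := hKplow (e t)
    have h2 := hMlow t (s t)
    have hss := dot_self_nonneg' (s t)
    have := hV_eq t
    nlinarith
  have hss_tend : Tendsto (fun t => s t ⬝ᵥ s t) atTop (nhds 0) := by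
    have hdiv : Tendsto (fun t => V t / m) atTop (nhds 0) := by
      simpa using hVtend.div_const m
    apply squeeze_zero' (Eventually.of_forall fun t => dot_self_nonneg' (s t))
      (Eventually.of_forall fun t => ?_) hdiv
    rw [le_div_iff₀ hm]
    have h1 := hKplow (e t)
    have h2 := hMlow t (s t)
    have hee := dot_self_nonneg' (e t)
    have := hV_eq t
    nlinarith
  -- componentwise convergence
  have hcomp : ∀ (f : ℝ → Fin n → ℝ), Tendsto (fun t => f t ⬝ᵥ f t) atTop (nhds 0) →
      ∀ i, Tendsto (fun t => f t i) atTop (nhds 0) := by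
    intro f hf i
    have hb : ∀ t, ‖f t i‖ ≤ Real.sqrt (f t ⬝ᵥ f t) := by
      intro t
      rw [Real.norm_eq_abs, ← Real.sqrt_mul_self_eq_abs]
      apply Real.sqrt_le_sqrt
      rw [dotProduct]
      exact Finset.single_le_sum (f := fun j => f t j * f t j)
        (fun j _ => mul_self_nonneg _) (Finset.mem_univ i)
    have hlim : Tendsto (fun t => Real.sqrt (f t ⬝ᵥ f t)) atTop (nhds 0) := by
      have h := (Real.continuous_sqrt.tendsto 0).comp hf
      simpa [Function.comp_def] using h
    exact squeeze_zero_norm hb hlim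
  constructor
  · rw [tendsto_pi_nhds]
    intro i
    simpa using hcomp e hee_tend i
  · rw [tendsto_pi_nhds]
    intro i
    have hsi := hcomp s hss_tend i
    have hΔei : Tendsto (fun t => (Δ *ᵥ e t) i) atTop (nhds 0) := by
      have h : Tendsto (fun t => ∑ j, Δ i j * e t j) atTop
          (nhds (∑ j : Fin n, Δ i j * 0)) :=
        tendsto_finset_sum _ fun j _ => (hcomp e hee_tend j).const_mul _
      simpa [Matrix.mulVec, dotProduct] using h
    have h2 : Tendsto (fun t => s t i - (Δ *ᵥ e t) i) atTop (nhds 0) := by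
      simpa using hsi.sub hΔei
    have heq : ∀ t, s t i - (Δ *ᵥ e t) i = e' t i := by
      intro t
      rw [hs_eq t]
      simp [Pi.add_apply]
    simpa using h2.congr heq
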